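/- Let φ : ℝ → ℝ be a continuously differentiable function with 0 ≤ φ(s) ≤ 1 and −4 ≤ φ'(s) ≤ 0 for all s, with φ(s) = 1 for s ≤ 1/6 and φ(s) = 0 for s ≥ 1/2. Define φ₁ on the open set {(x,y,z) ∈ ℂ³ : x ≠ 0} by φ₁(x,y,z) = φ(√(|y|² + |z|²)/|x|). Then φ₁ is differentiable at every point with x ≠ 0, and the operator norm of its real Fréchet derivative at such a point is strictly less than 6/|x|; equivalently, its holomorphic gradient ∇φ₁ = (∂φ₁/∂x, ∂φ₁/∂y, ∂φ₁/∂z) and its antiholomorphic gradient both have Euclidean norm strictly less than 3/|x|. -/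

import Mathlib

/-- The cut-off function `φ₁(x,y,z) = φ(√(|y|²+|z|²)/|x|)` on `ℂ³` (with the
Euclidean metric), viewed as a map on `EuclideanSpace ℂ (Fin 3)`. -/
noncomputable def phiOne (φ : ℝ → ℝ) (w : EuclideanSpace ℂ (Fin 3)) : ℝ :=
  φ (Real.sqrt (‖w 1‖ ^ 2 + ‖w 2‖ ^ 2) / ‖w 0‖)

lemma coord_le (v : EuclideanSpace ℂ (Fin 3)) (i : Fin 3) : ‖v i‖ ≤ ‖v‖ := by
  rw [EuclideanSpace.norm_eq,
    show ‖v i‖ = Real.sqrt (‖v i‖ ^ 2) from (Real.sqrt_sq (norm_nonneg _)).symm]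
  exact Real.sqrt_le_sqrt (Finset.single_le_sum (fun j _ => sq_nonneg ‖v j‖) (Finset.mem_univ i))

noncomputable def myf : EuclideanSpace ℂ (Fin 3) →L[ℝ] EuclideanSpace ℂ (Fin 3) :=
  (((EuclideanSpace.equiv (Fin 3) ℂ).symm.toContinuousLinearMap).comp
    (ContinuousLinearMap.pi ![0, EuclideanSpace.proj 1, EuclideanSpace.proj 2])).restrictScalars ℝ

lemma myf_apply (w : EuclideanSpace ℂ (Fin 3)) :
    myf w 0 = 0 ∧ myf w 1 = w 1 ∧ myf w 2 = w 2 := ⟨rfl, rfl, rfl⟩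

lemma myf_norm (w : EuclideanSpace ℂ (Fin 3)) :
    ‖myf w‖ = Real.sqrt (‖w 1‖ ^ 2 + ‖w 2‖ ^ 2) := by
  rw [EuclideanSpace.norm_eq, Fin.sum_univ_three, (myf_apply w).1, (myf_apply w).2.1,
    (myf_apply w).2.2]
  simp

lemma myf_norm_le (w : EuclideanSpace ℂ (Fin 3)) : ‖myf w‖ ≤ ‖w‖ := by
  rw [myf_norm, EuclideanSpace.norm_eq, Fin.sum_univ_three]
  apply Real.sqrt_le_sqrt
  have := sq_nonneg ‖w 0‖
  linarith




set_option maxHeartbeats 1000000 in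
/-- If `φ : ℝ → ℝ` is `C¹` with `0 ≤ φ ≤ 1`, `−4 ≤ φ' ≤ 0`,
`φ ≡ 1` on `s ≤ 1/6` and `φ ≡ 0` on `s ≥ 1/2`, then
`φ₁(x,y,z) = φ(√(|y|²+|z|²)/|x|)` is differentiable (over `ℝ`) at every point with
`x ≠ 0` and the operator norm of its real Fréchet derivative there is `< 6/|x|`
(equivalently, the holomorphic and antiholomorphic gradients have norm `< 3/|x|`). -/
theorem stmt_2 (φ : ℝ → ℝ) (hφ : ContDiff ℝ 1 φ)
    (hφ0 : ∀ s, 0 ≤ φ s) (hφ1 : ∀ s, φ s ≤ 1)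
    (hφ'lo : ∀ s, -4 ≤ deriv φ s) (hφ'hi : ∀ s, deriv φ s ≤ 0)
    (hφlow : ∀ s : ℝ, s ≤ 1 / 6 → φ s = 1)
    (hφhigh : ∀ s : ℝ, 1 / 2 ≤ s → φ s = 0)
    (x y z : ℂ) (hx : x ≠ 0) :
    DifferentiableAt ℝ (phiOne φ) ((WithLp.equiv 2 (Fin 3 → ℂ)).symm ![x, y, z]) ∧
    ‖fderiv ℝ (phiOne φ) ((WithLp.equiv 2 (Fin 3 → ℂ)).symm ![x, y, z])‖
      < 6 / ‖x‖ := by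
  set E := EuclideanSpace ℂ (Fin 3)
  set p : E := (WithLp.equiv 2 (Fin 3 → ℂ)).symm ![x, y, z] with hpdef
  set a : E → ℝ := fun w => ‖w 0‖ with hadef
  set r : E → ℝ := fun w => Real.sqrt (‖w 1‖ ^ 2 + ‖w 2‖ ^ 2) with hrdef
  have hphi : phiOne φ = fun w => φ (r w * (a w)⁻¹) := by
    funext w
    simp only [phiOne, hrdef, hadef, div_eq_mul_inv]
  have hgoal : ‖x‖ = a p := rfl
  have hax : (0 : ℝ) < a p := by
    have : a p = ‖x‖ := rfl
    rw [this]; exact norm_pos_iff.mpr hx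
  -- Lipschitz facts
  have haL : LipschitzWith 1 a := by
    apply LipschitzWith.of_dist_le_mul
    intro w w'
    rw [NNReal.coe_one, one_mul, Real.dist_eq, dist_eq_norm]
    calc |‖w 0‖ - ‖w' 0‖| ≤ ‖w 0 - w' 0‖ := abs_norm_sub_norm_le _ _
      _ = ‖(w - w') 0‖ := rfl
      _ ≤ ‖w - w'‖ := coord_le _ _
  have hrf : r = fun w => ‖myf w‖ := by funext w; rw [myf_norm]
  have hrL : LipschitzWith 1 r := by
    rw [hrf]
    apply LipschitzWith.of_dist_le_mul
    intro w w'
    rw [NNReal.coe_one, one_mul, Real.dist_eq, dist_eq_norm]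
    calc |‖myf w‖ - ‖myf w'‖| ≤ ‖myf w - myf w'‖ := abs_norm_sub_norm_le _ _
      _ = ‖myf (w - w')‖ := by rw [map_sub]
      _ ≤ ‖w - w'‖ := myf_norm_le _
  -- differentiability of a at p
  have hA : DifferentiableAt ℝ a p := by
    have h1 : DifferentiableAt ℝ (fun w : E => w 0) p := by
      have := (((EuclideanSpace.proj (0 : Fin 3) : E →L[ℂ] ℂ).restrictScalars
        ℝ)).differentiableAt (x := p)
      exact this
    exact h1.norm ℂ hx
  have hAle : ‖fderiv ℝ a p‖ ≤ 1 := by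
    simpa using norm_fderiv_le_of_lipschitz ℝ haL (x₀ := p)
  rcases eq_or_lt_of_le (show (0 : ℝ) ≤ r p from Real.sqrt_nonneg _) with h0 | hrp
  · -- r p = 0 : locally constant 1
    have hcont : ContinuousAt (fun w => r w * (a w)⁻¹) p :=
      (hrL.continuous.continuousAt).mul ((haL.continuous.continuousAt).inv₀ (ne_of_gt hax))
    have hlt : ∀ᶠ w in nhds p, r w * (a w)⁻¹ < 1 / 6 :=
      hcont.eventually_lt continuousAt_const (by rw [← h0, zero_mul]; norm_num)
    have heq : phiOne φ =ᶠ[nhds p] fun _ => (1 : ℝ) := by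
      filter_upwards [hlt] with w hw
      simp only [hphi]
      exact hφlow _ hw.le
    refine ⟨(differentiableAt_const (1 : ℝ)).congr_of_eventuallyEq heq, ?_⟩
    rw [heq.fderiv_eq, fderiv_fun_const]
    simp only [Pi.zero_apply, norm_zero]
    positivity
  · -- r p > 0
    have hrp' : (0 : ℝ) < ‖myf p‖ := by rw [myf_norm]; exact hrp
    have hfp : myf p ≠ 0 := norm_pos_iff.mp hrp'
    have hR : DifferentiableAt ℝ r p := by
      rw [hrf]
      exact (myf.differentiableAt).norm ℂ hfp
    have hRle : ‖fderiv ℝ r p‖ ≤ 1 := by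
      simpa using norm_fderiv_le_of_lipschitz ℝ hrL (x₀ := p)
    set A := fderiv ℝ a p with hAdef
    set R := fderiv ℝ r p with hRdef
    have hinv : HasFDerivAt (fun w => (a w)⁻¹) (-((a p) ^ 2)⁻¹ • A) p :=
      (hasDerivAt_inv (ne_of_gt hax)).comp_hasFDerivAt p hA.hasFDerivAt
    have hmul : HasFDerivAt (fun w => r w * (a w)⁻¹)
        (r p • (-((a p) ^ 2)⁻¹ • A) + (a p)⁻¹ • R) p :=
      hR.hasFDerivAt.mul hinv
    set t : ℝ := r p * (a p)⁻¹ with htdef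
    have hφd : HasDerivAt φ (deriv φ t) t := (hφ.differentiable one_ne_zero t).hasDerivAt
    have hcomp : HasFDerivAt (phiOne φ)
        (deriv φ t • (r p • (-((a p) ^ 2)⁻¹ • A) + (a p)⁻¹ • R)) p := by
      rw [hphi]
      exact hφd.comp_hasFDerivAt p hmul
    refine ⟨hcomp.differentiableAt, ?_⟩
    rw [hcomp.fderiv, hgoal]
    have e1 : ‖r p • (-((a p) ^ 2)⁻¹ • A)‖ = r p * (((a p) ^ 2)⁻¹ * ‖A‖) := by
      rw [norm_smul, norm_smul, norm_neg, Real.norm_eq_abs, Real.norm_eq_abs,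
        abs_of_nonneg hrp.le, abs_of_nonneg (by positivity : (0:ℝ) ≤ ((a p) ^ 2)⁻¹)]
    have e2 : ‖(a p)⁻¹ • R‖ = (a p)⁻¹ * ‖R‖ := by
      rw [norm_smul, Real.norm_eq_abs, abs_of_nonneg (by positivity : (0:ℝ) ≤ (a p)⁻¹)]
    have hGle : ‖r p • (-((a p) ^ 2)⁻¹ • A) + (a p)⁻¹ • R‖
        ≤ r p * ((a p) ^ 2)⁻¹ + (a p)⁻¹ := by
      calc ‖r p • (-((a p) ^ 2)⁻¹ • A) + (a p)⁻¹ • R‖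
          ≤ ‖r p • (-((a p) ^ 2)⁻¹ • A)‖ + ‖(a p)⁻¹ • R‖ := norm_add_le _ _
        _ = r p * (((a p) ^ 2)⁻¹ * ‖A‖) + (a p)⁻¹ * ‖R‖ := by rw [e1, e2]
        _ ≤ r p * (((a p) ^ 2)⁻¹ * 1) + (a p)⁻¹ * 1 := by gcongr
        _ = r p * ((a p) ^ 2)⁻¹ + (a p)⁻¹ := by ring
    rcases lt_or_ge t (1 / 2) with ht | ht
    · have hd4 : |deriv φ t| ≤ 4 := abs_le.mpr ⟨by linarith [hφ'lo t], by linarith [hφ'hi t]⟩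
      have hrlt : r p * ((a p) ^ 2)⁻¹ < 1 / 2 * (a p)⁻¹ := by
        rw [pow_two, mul_inv, ← mul_assoc]
        exact mul_lt_mul_of_pos_right ht (inv_pos.mpr hax)
      calc ‖deriv φ t • (r p • (-((a p) ^ 2)⁻¹ • A) + (a p)⁻¹ • R)‖
          = |deriv φ t| * ‖r p • (-((a p) ^ 2)⁻¹ • A) + (a p)⁻¹ • R‖ := by
            rw [norm_smul, Real.norm_eq_abs]
        _ ≤ 4 * (r p * ((a p) ^ 2)⁻¹ + (a p)⁻¹) :=
            mul_le_mul hd4 hGle (norm_nonneg _) (by norm_num)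
        _ < 4 * (1 / 2 * (a p)⁻¹ + (a p)⁻¹) := by
            have : (0:ℝ) < (a p)⁻¹ := inv_pos.mpr hax
            nlinarith
        _ = 6 / a p := by rw [div_eq_mul_inv]; ring
    · have hmin : IsLocalMin φ t := by
        apply Filter.Eventually.of_forall
        intro s
        rw [hφhigh t ht]
        exact hφ0 s
      rw [hmin.deriv_eq_zero, zero_smul, norm_zero]
      positivity
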